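/- Let c > 0 be an absolute constant and let 𝒟 be a distribution on ℝ^d with mean zero and positive definite covariance Σ̃ satisfying the C_HW-Hanson–Wright property with C_HW = O(1), and suppose erk(Σ̃) := Tr(Σ̃)/‖Σ̃‖ ≥ c·d. Then for every even p ∈ ℕ, (E_{x∼𝒟} |‖x‖² − Tr(Σ̃)|^p)^{1/p} ≤ O(Tr(Σ̃)·p/√d). -/

import Mathlib

open MeasureTheory ProbabilityTheory Matrix Finset Real Filter

noncomputable section

namespace Paper

variable {d n : ℕ}

/-- Spectral (operator) norm of a matrix. -/
def specNorm (A : Matrix (Fin d) (Fin d) ℝ) : ℝ :=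
  ‖LinearMap.toContinuousLinearMap (Matrix.toEuclideanLin A)‖

/-- Frobenius norm of a matrix. -/
def frobNorm (A : Matrix (Fin d) (Fin d) ℝ) : ℝ :=
  Real.sqrt (∑ i, ∑ j, (A i j) ^ 2)

/-- Effective rank. -/
def erk (A : Matrix (Fin d) (Fin d) ℝ) : ℝ := A.trace / specNorm A

open Classical in
/-- Positive semidefinite square root (junk value `0` if not psd). -/
def matSqrt (A : Matrix (Fin d) (Fin d) ℝ) : Matrix (Fin d) (Fin d) ℝ :=
  if h : A.PosSemidef then h.1.eigenvectorUnitary.1 * diagonal (Real.sqrt ∘ h.1.eigenvalues) *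
    (star h.1.eigenvectorUnitary : Matrix (Fin d) (Fin d) ℝ) else 0

/-- Inverse of the positive semidefinite square root. -/
def invSqrt (A : Matrix (Fin d) (Fin d) ℝ) : Matrix (Fin d) (Fin d) ℝ := (matSqrt A)⁻¹

/-- Standard Gaussian measure on ℝ^d. -/
def stdGaussian (d : ℕ) : Measure (Fin d → ℝ) :=
  Measure.pi fun _ => gaussianReal 0 1

/-- Centered Gaussian measure with covariance S. -/
def gaussianOf (S : Matrix (Fin d) (Fin d) ℝ) : Measure (Fin d → ℝ) :=
  (stdGaussian d).map (matSqrt S).mulVec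

/-- Spatial sign (projection on the sphere of radius √d). -/
def spSign (d : ℕ) (x : Fin d → ℝ) : Fin d → ℝ :=
  fun i => Real.sqrt d * x i / Real.sqrt (∑ j, (x j) ^ 2)

/-- Truncated spatial sign with threshold Δ. -/
def truncSign (d : ℕ) (Δ : ℝ) (x : Fin d → ℝ) : Fin d → ℝ :=
  if (∑ i, (x i) ^ 2) < (d : ℝ) - Δ then fun i => Real.sqrt ((d : ℝ) / ((d : ℝ) - Δ)) * x i
  else if (d : ℝ) + Δ < (∑ i, (x i) ^ 2) then fun i => Real.sqrt ((d : ℝ) / ((d : ℝ) + Δ)) * x i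
  else spSign d x

/-- Mean vector of a measure on ℝ^d. -/
def meanVec (μ : Measure (Fin d → ℝ)) : Fin d → ℝ := fun i => ∫ x, x i ∂μ

/-- Covariance matrix of a measure on ℝ^d. -/
def covMatrix (μ : Measure (Fin d → ℝ)) : Matrix (Fin d) (Fin d) ℝ :=
  Matrix.of fun i j => ∫ x, (x i - meanVec μ i) * (x j - meanVec μ j) ∂μ

/-- Inner product of vectors indexed by `ι`. -/
def inner1 {ι : Type*} [Fintype ι] (v x : ι → ℝ) : ℝ := ∑ j, v j * x j

/-- Inner product of "matrices" indexed by `ι × ι`. -/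
def innerM {ι : Type*} [Fintype ι] (P Q : ι → ι → ℝ) : ℝ := ∑ j, ∑ k, P j k * Q j k

/-- Outer product. -/
def outer {ι : Type*} (x y : ι → ℝ) : ι → ι → ℝ := fun j k => x j * y k

/-- sup_{v ∈ V} ⟨v, a⟩². -/
def supInner {ι : Type*} [Fintype ι] (V : Set (ι → ℝ)) (a : ι → ℝ) : ℝ :=
  sSup ((fun v => (inner1 v a) ^ 2) '' V)

/-- Generalized stability (Definition 4 of the paper). -/
def IsStable {ι : Type*} [Fintype ι] (x : Fin n → ι → ℝ) (ε δ r : ℝ)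
    (V : Set (ι → ℝ)) (P : Set (ι → ι → ℝ)) (μ : ι → ℝ) (Q : ι → ι → ℝ) : Prop :=
  ∀ v ∈ V, ∀ p ∈ P, ∀ M : Finset (Fin n), (1 - ε) * (n : ℝ) ≤ (M.card : ℝ) →
    |(M.card : ℝ)⁻¹ * ∑ i ∈ M, inner1 v (fun j => x i j - μ j)| ≤ δ ∧
    |(M.card : ℝ)⁻¹ * ∑ i ∈ M, innerM p (outer (fun j => x i j - μ j) (fun j => x i j - μ j))
        - innerM p Q| ≤ δ ^ 2 / ε ∧
    |innerM p Q| ≤ r ^ 2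

/-- 𝒱 ⊗ 𝒱 ⊆ 𝒫. -/
def TensorSub {ι : Type*} (V : Set (ι → ℝ)) (P : Set (ι → ι → ℝ)) : Prop :=
  ∀ v ∈ V, ∀ v' ∈ V, outer v v' ∈ P

/-- Adequacy of 𝒫 with respect to 𝒱. -/
def Adequate {ι : Type*} [Fintype ι] (V : Set (ι → ℝ)) (P : Set (ι → ι → ℝ)) : Prop :=
  (∀ a : ι → ℝ, ∀ p ∈ P, 0 ≤ innerM p (outer a a)) ∧
  (∀ a b : ι → ℝ, ∀ p ∈ P, (innerM p (outer a b)) ^ 2 ≤ supInner V a * supInner V b)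

/-- The weight set 𝒲_ε. -/
def weightSet (n : ℕ) (ε : ℝ) : Set (Fin n → ℝ) :=
  {w | (∀ i, 0 ≤ w i ∧ w i ≤ 1 / (n : ℝ)) ∧ 1 - ε ≤ ∑ i, w i}

/-- Weighted mean μ_w. -/
def wMean {ι : Type*} (w : Fin n → ℝ) (x : Fin n → ι → ℝ) : ι → ℝ :=
  fun j => (∑ i, w i)⁻¹ * ∑ i, w i * x i j

/-- Weighted covariance Σ_w. -/
def wCov {ι : Type*} (w : Fin n → ℝ) (x : Fin n → ι → ℝ) : ι → ι → ℝ :=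
  fun j k => (∑ i, w i)⁻¹ * ∑ i, w i * (x i j - wMean w x j) * (x i k - wMean w x k)

/-- A d×d matrix viewed as a vector in ℝ^{d²}. -/
def mvec (A : Matrix (Fin d) (Fin d) ℝ) : Fin d × Fin d → ℝ := fun p => A p.1 p.2

/-- Id_d as a vector in ℝ^{d²}. -/
def idVec (d : ℕ) : Fin d × Fin d → ℝ := fun p => if p.1 = p.2 then 1 else 0

/-- 2·Id_{d²}. -/
def twoId (d : ℕ) : (Fin d × Fin d) → (Fin d × Fin d) → ℝ :=
  fun p q => if p = q then 2 else 0

/-- The Frobenius-norm ball ℬ_R (as vectors in ℝ^{d²}). -/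
def ballF (d : ℕ) (R : ℝ) : Set (Fin d × Fin d → ℝ) :=
  {V | ∑ p : Fin d × Fin d, (V p) ^ 2 ≤ R ^ 2}

/-- ℬ_R ⊗ ℬ_R. -/
def ballFT (d : ℕ) (R : ℝ) : Set ((Fin d × Fin d) → (Fin d × Fin d) → ℝ) :=
  {P | ∃ V ∈ ballF d R, ∃ W ∈ ballF d R, P = outer V W}

/-- 𝒮_R = {uuᵀ : ‖u‖ ≤ √R}. -/
def sphereSet (d : ℕ) (R : ℝ) : Set (Fin d × Fin d → ℝ) :=
  {V | ∃ u : Fin d → ℝ, (∑ i, (u i) ^ 2) ≤ R ∧ V = fun p => u p.1 * u p.2}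

/-- 𝒫_R: the set of degree-4 pseudo-expectation moment matrices Ẽ[v^{⊗4}]
under the constraint ‖v‖² ≤ R. -/
def pseudoSet (d : ℕ) (R : ℝ) : Set ((Fin d × Fin d) → (Fin d × Fin d) → ℝ) :=
  {P | ∃ L : MvPolynomial (Fin d) ℝ →ₗ[ℝ] ℝ,
    L 1 = 1 ∧
    (∀ q : MvPolynomial (Fin d) ℝ, q.totalDegree ≤ 2 → 0 ≤ L (q ^ 2)) ∧
    (∀ q : MvPolynomial (Fin d) ℝ, q.totalDegree ≤ 1 →
      0 ≤ L ((MvPolynomial.C R - ∑ i, MvPolynomial.X i ^ 2) * q ^ 2)) ∧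
    P = fun p q => L (MvPolynomial.X p.1 * MvPolynomial.X p.2 *
        MvPolynomial.X q.1 * MvPolynomial.X q.2)}

/-- The Hanson–Wright property of a distribution ρ with mean μv and covariance S. -/
def HansonWright (ρ : Measure (Fin d → ℝ)) (μv : Fin d → ℝ)
    (S : Matrix (Fin d) (Fin d) ℝ) (CHW : ℝ) : Prop :=
  ∀ A : Matrix (Fin d) (Fin d) ℝ, ∀ t : ℝ, 0 < t →
    ρ {x | t ≤ |(∑ j, ∑ k, ((invSqrt S).mulVec (fun l => x l - μv l)) j * A j k *
        ((invSqrt S).mulVec (fun l => x l - μv l)) k) - A.trace|}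
      ≤ ENNReal.ofReal (2 * Real.exp (-(1 / CHW) *
          min (t ^ 2 / (frobNorm A) ^ 2) (t / specNorm A)))

/-- ε-corruption of an indexed family of points. -/
def Corruption {α : Type*} (n : ℕ) (ε : ℝ) (x y : Fin n → α) : Prop :=
  ∃ G : Finset (Fin n), (1 - ε) * (n : ℝ) ≤ (G.card : ℝ) ∧ ∀ i ∈ G, x i = y i

/-- Entries of the 4-tensor E[(xxᵀ − Id)^{⊗2}] of a measure μ on ℝ^d. -/
def tensorEnt (μ : Measure (Fin d → ℝ)) (i1 i2 i3 i4 : Fin d) : ℝ :=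
  ∫ x, (x i1 * x i2 - if i1 = i2 then (1 : ℝ) else 0) *
       (x i3 * x i4 - if i3 = i4 then (1 : ℝ) else 0) ∂μ

/-- E[(xxᵀ − Id)^{⊗2}] as a d²×d² matrix. -/
def tensorQ (μ : Measure (Fin d → ℝ)) : (Fin d × Fin d) → (Fin d × Fin d) → ℝ :=
  fun p q => tensorEnt μ p.1 p.2 q.1 q.2


section Aux

open Set

private theorem exp_neg_le_pow' (k : ℕ) (hk : 1 ≤ k) (u : ℝ) (hu : 0 < u) :
    Real.exp (-u) ≤ ((k:ℝ)/u)^k := by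
  have hk0 : (0:ℝ) < k := by exact_mod_cast hk
  have h2 : ((u/(k:ℝ)))^k ≤ Real.exp u := by
    calc (u/(k:ℝ))^k = u^k / (k:ℝ)^k := div_pow u _ k
      _ ≤ u ^ k / (k.factorial : ℝ) := by
          apply div_le_div_of_nonneg_left (by positivity) (by positivity)
          exact_mod_cast Nat.factorial_le_pow k
      _ ≤ ∑ i ∈ Finset.range (k+1), u ^ i / i.factorial :=
          Finset.single_le_sum (f := fun i => u ^ i / (i.factorial : ℝ))
            (fun i _ => by positivity) (Finset.self_mem_range_succ k)
      _ ≤ Real.exp u := Real.sum_le_exp_of_nonneg hu.le _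
  rw [Real.exp_neg, inv_le_comm₀ (Real.exp_pos u) (by positivity)]
  calc (((k:ℝ)/u)^k)⁻¹ = (u/(k:ℝ))^k := by rw [← inv_pow, inv_div]
    _ ≤ Real.exp u := h2

private theorem mulVec_sq_le' {d : ℕ} (A : Matrix (Fin d) (Fin d) ℝ) (v : Fin d → ℝ) :
    ∑ j, (A.mulVec v j)^2 ≤ specNorm A ^ 2 * ∑ j, v j ^ 2 := by
  set L := LinearMap.toContinuousLinearMap (Matrix.toEuclideanLin A) with hL
  have h := L.le_opNorm ((WithLp.equiv 2 (Fin d → ℝ)).symm v)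
  have happ : L ((WithLp.equiv 2 (Fin d → ℝ)).symm v)
      = (WithLp.equiv 2 (Fin d → ℝ)).symm (A.mulVec v) := by
    simp [hL, WithLp.equiv_symm_apply, Matrix.toEuclideanLin_apply_piLp_toLp]
  rw [happ] at h
  have hn1 : ‖(WithLp.equiv 2 (Fin d → ℝ)).symm (A.mulVec v)‖
      = Real.sqrt (∑ j, (A.mulVec v j)^2) := by
    rw [EuclideanSpace.norm_eq]
    congr 1
    exact Finset.sum_congr rfl fun j _ => by
      rw [WithLp.equiv_symm_apply, PiLp.toLp_apply, Real.norm_eq_abs, sq_abs]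
  have hn2 : ‖(WithLp.equiv 2 (Fin d → ℝ)).symm v‖ = Real.sqrt (∑ j, v j ^2) := by
    rw [EuclideanSpace.norm_eq]
    congr 1
    exact Finset.sum_congr rfl fun j _ => by
      rw [WithLp.equiv_symm_apply, PiLp.toLp_apply, Real.norm_eq_abs, sq_abs]
  rw [hn1, hn2] at h
  have h1 : (0:ℝ) ≤ ∑ j, (A.mulVec v j)^2 := by positivity
  have h2 : (0:ℝ) ≤ ∑ j, v j ^2 := by positivity
  calc ∑ j, (A.mulVec v j)^2 = Real.sqrt (∑ j, (A.mulVec v j)^2) ^ 2 := (Real.sq_sqrt h1).symm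
    _ ≤ (specNorm A * Real.sqrt (∑ j, v j ^2)) ^ 2 := by
        apply pow_le_pow_left₀ (Real.sqrt_nonneg _) h
    _ = specNorm A ^2 * ∑ j, v j ^2 := by
        rw [mul_pow, Real.sq_sqrt h2]

private theorem quadform_id' {d : ℕ} {S : Matrix (Fin d) (Fin d) ℝ} (hS : S.PosDef)
    (x : Fin d → ℝ) :
    ∑ j, ∑ k, ((invSqrt S).mulVec x) j * S j k * ((invSqrt S).mulVec x) k = ∑ i, x i ^ 2 := by
  classical
  have hpsd := hS.posSemidef
  have hsq : matSqrt S = hpsd.1.eigenvectorUnitary.1 * diagonal (Real.sqrt ∘ hpsd.1.eigenvalues) *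
      (star hpsd.1.eigenvectorUnitary : Matrix (Fin d) (Fin d) ℝ) := dif_pos hpsd
  set U : Matrix (Fin d) (Fin d) ℝ := hpsd.1.eigenvectorUnitary.1 with hU
  set D : Matrix (Fin d) (Fin d) ℝ := diagonal (Real.sqrt ∘ hpsd.1.eigenvalues) with hD
  set R := U * D * star U with hR
  have hRR : R * R = S := by
    have hUU : star U * U = 1 := Unitary.coe_star_mul_self _
    have hspec := hpsd.1.spectral_theorem
    rw [Unitary.conjStarAlgAut_apply] at hspec
    have hDD : D * D = Matrix.diagonal (RCLike.ofReal ∘ hpsd.1.eigenvalues) := by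
      rw [hD, Matrix.diagonal_mul_diagonal]
      congr 1
      funext i
      simp [Real.mul_self_sqrt (hpsd.eigenvalues_nonneg i)]
    calc R * R = U * D * (star U * U) * D * star U := by simp only [hR, Matrix.mul_assoc]
      _ = U * (D * D) * star U := by rw [hUU, Matrix.mul_one]; simp only [Matrix.mul_assoc]
      _ = S := by rw [hDD]; exact hspec.symm
  have hdet : IsUnit R.det := by
    have hdS : 0 < S.det := hS.det_pos
    have : R.det * R.det = S.det := by rw [← Matrix.det_mul, hRR]
    have hne : R.det ≠ 0 := by
      intro h0; rw [h0, mul_zero] at this; exact (ne_of_gt hdS) this.symm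
    exact isUnit_iff_ne_zero.mpr hne
  have hBR : R⁻¹ * R = 1 := Matrix.nonsing_inv_mul R hdet
  have hRB : R * R⁻¹ = 1 := Matrix.mul_nonsing_inv R hdet
  have hRsymm : Rᵀ = R := by
    simp [hR, Matrix.transpose_mul, Matrix.star_eq_conjTranspose,
      Matrix.conjTranspose_eq_transpose_of_trivial, Matrix.mul_assoc, hD]
  have hBsymm : (R⁻¹)ᵀ = R⁻¹ := by rw [Matrix.transpose_nonsing_inv, hRsymm]
  have hSsymm : Sᵀ = S := by
    have := hS.1
    simpa [Matrix.IsHermitian, Matrix.conjTranspose_eq_transpose_of_trivial] using this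
  have hinv : invSqrt S = R⁻¹ := by rw [invSqrt, hsq]
  have key : (S * R⁻¹)ᵀ * R⁻¹ = 1 := by
    calc (S * R⁻¹)ᵀ * R⁻¹ = (R⁻¹ * S) * R⁻¹ := by rw [Matrix.transpose_mul, hBsymm, hSsymm]
      _ = R⁻¹ * (R * (R * R⁻¹)) := by rw [← hRR, Matrix.mul_assoc, Matrix.mul_assoc]
      _ = 1 := by rw [hRB, Matrix.mul_one, hBR]
  have h1 : ∀ z : Fin d → ℝ, ∑ j, ∑ k, z j * S j k * z k = z ⬝ᵥ (S *ᵥ z) := by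
    intro z
    simp only [dotProduct, Matrix.mulVec, dotProduct, Finset.mul_sum]
    exact Finset.sum_congr rfl fun j _ => Finset.sum_congr rfl fun k _ => by ring
  rw [hinv, h1]
  calc (R⁻¹ *ᵥ x) ⬝ᵥ (S *ᵥ (R⁻¹ *ᵥ x))
      = (R⁻¹ *ᵥ x) ⬝ᵥ ((S * R⁻¹) *ᵥ x) := by rw [Matrix.mulVec_mulVec]
    _ = ((R⁻¹ *ᵥ x) ᵥ* (S * R⁻¹)) ⬝ᵥ x := by rw [Matrix.dotProduct_mulVec]
    _ = (((S * R⁻¹)ᵀ * R⁻¹) *ᵥ x) ⬝ᵥ x := by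
        rw [← Matrix.mulVec_transpose, Matrix.mulVec_mulVec]
    _ = x ⬝ᵥ x := by rw [key, Matrix.one_mulVec]
    _ = ∑ i, x i ^2 := by simp [dotProduct, pow_two]

private theorem key_integral' (M : ℝ) (hM : 0 < M) (p : ℕ) (hp : 1 ≤ p) (e : ℝ → ℝ)
    (he1 : ∀ t, 0 < t → e t ≤ 1) (he2 : ∀ t, 0 < t → e t ≤ (M/t)^(2*p)) :
    ∫⁻ t in Ioi (0:ℝ), ENNReal.ofReal (e t * t^((p:ℝ)-1))
      ≤ ENNReal.ofReal (2 * M^((p:ℝ))) := by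
  have hpR : (1:ℝ) ≤ (p:ℝ) := by exact_mod_cast hp
  have hsplit : Ioi (0:ℝ) = Ioc 0 M ∪ Ioi M := (Ioc_union_Ioi_eq_Ioi hM.le).symm
  rw [hsplit, lintegral_union measurableSet_Ioi (Ioc_disjoint_Ioi le_rfl)]
  have hIoc : ∫⁻ t in Ioc (0:ℝ) M, ENNReal.ofReal (e t * t^((p:ℝ)-1))
      ≤ ENNReal.ofReal (M^((p:ℝ))) := by
    calc ∫⁻ t in Ioc (0:ℝ) M, ENNReal.ofReal (e t * t^((p:ℝ)-1))
        ≤ ∫⁻ _ in Ioc (0:ℝ) M, ENNReal.ofReal (M^((p:ℝ)-1)) := by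
          apply setLIntegral_mono' measurableSet_Ioc
          intro t ht
          apply ENNReal.ofReal_le_ofReal
          calc e t * t^((p:ℝ)-1) ≤ 1 * M^((p:ℝ)-1) := by
                apply mul_le_mul (he1 t ht.1) (Real.rpow_le_rpow ht.1.le ht.2 (by linarith))
                  (Real.rpow_nonneg ht.1.le _) zero_le_one
            _ = M^((p:ℝ)-1) := one_mul _
      _ = ENNReal.ofReal (M^((p:ℝ)-1)) * volume (Ioc (0:ℝ) M) := setLIntegral_const _ _
      _ = ENNReal.ofReal (M^((p:ℝ)-1)) * ENNReal.ofReal M := by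
          rw [Real.volume_Ioc, sub_zero]
      _ = ENNReal.ofReal (M^((p:ℝ)-1) * M) := (ENNReal.ofReal_mul (by positivity)).symm
      _ = ENNReal.ofReal (M^((p:ℝ))) := by
          rw [← Real.rpow_add_one hM.ne' ((p:ℝ)-1)]
          norm_num
  have hIoi : ∫⁻ t in Ioi M, ENNReal.ofReal (e t * t^((p:ℝ)-1))
      ≤ ENNReal.ofReal (M^((p:ℝ))) := by
    have hlt : -(p:ℝ)-1 < -1 := by linarith
    calc ∫⁻ t in Ioi M, ENNReal.ofReal (e t * t^((p:ℝ)-1))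
        ≤ ∫⁻ t in Ioi M, ENNReal.ofReal (M^(2*p) * t^(-(p:ℝ)-1)) := by
          apply setLIntegral_mono' measurableSet_Ioi
          intro t ht
          have ht0 : (0:ℝ) < t := hM.trans ht
          apply ENNReal.ofReal_le_ofReal
          calc e t * t^((p:ℝ)-1) ≤ (M/t)^(2*p) * t^((p:ℝ)-1) := by
                apply mul_le_mul_of_nonneg_right (he2 t ht0) (Real.rpow_nonneg ht0.le _)
            _ = M^(2*p) * t^(-(p:ℝ)-1) := by
                rw [div_pow, div_mul_eq_mul_div, mul_div_assoc,
                  ← Real.rpow_natCast t (2*p), ← Real.rpow_sub ht0]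
                congr 1
                push_cast; ring
      _ = ENNReal.ofReal (M^(2*p)) * ∫⁻ t in Ioi M, ENNReal.ofReal (t^(-(p:ℝ)-1)) := by
          simp_rw [ENNReal.ofReal_mul (by positivity : (0:ℝ) ≤ M^(2*p))]
          rw [lintegral_const_mul' _ _ ENNReal.ofReal_ne_top]
      _ = ENNReal.ofReal (M^(2*p)) * ENNReal.ofReal (∫ t in Ioi M, t^(-(p:ℝ)-1)) := by
          rw [ofReal_integral_eq_lintegral_ofReal (integrableOn_Ioi_rpow_of_lt hlt hM)]
          filter_upwards [self_mem_ae_restrict measurableSet_Ioi] with t ht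
          exact Real.rpow_nonneg (hM.trans ht).le _
      _ ≤ ENNReal.ofReal (M^(2*p)) * ENNReal.ofReal (M^(-(p:ℝ))) := by
          apply mul_le_mul_right
          apply ENNReal.ofReal_le_ofReal
          rw [integral_Ioi_rpow_of_lt hlt hM]
          have h1 : -(p:ℝ)-1+1 = -(p:ℝ) := by ring
          rw [h1, neg_div_neg_eq]
          exact div_le_self (Real.rpow_nonneg hM.le _) hpR
      _ = ENNReal.ofReal (M^(2*p) * M^(-(p:ℝ))) := (ENNReal.ofReal_mul (by positivity)).symm
      _ = ENNReal.ofReal (M^((p:ℝ))) := by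
          rw [← Real.rpow_natCast M (2*p), ← Real.rpow_add hM]
          congr 1
          push_cast; ring
  calc _ ≤ ENNReal.ofReal (M^((p:ℝ))) + ENNReal.ofReal (M^((p:ℝ))) := add_le_add hIoc hIoi
    _ = ENNReal.ofReal (2 * M^((p:ℝ))) := by
        rw [← ENNReal.ofReal_add (by positivity) (by positivity)]
        congr 1; ring

private theorem eight_mul_le' (p : ℕ) (hp : 1 ≤ p) : 8*p ≤ 16^p := by
  have h1 : p < 2^p := Nat.lt_two_pow_self
  have h2 : 8 ≤ 8^p := Nat.le_self_pow (by omega) 8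
  calc 8*p ≤ 8*2^p := by omega
    _ ≤ 8^p * 2^p := Nat.mul_le_mul_right _ h2
    _ = 16^p := by rw [← Nat.mul_pow]

end Aux

set_option maxHeartbeats 2000000 in
/-- moment bound for the squared norm of a Hanson–Wright
distribution with large effective rank. -/
theorem hanson_wright_norm_moments :
    ∀ c CHW : ℝ, 0 < c → 0 < CHW →
      ∃ C' : ℝ, 0 < C' ∧
        ∀ (d : ℕ) (ρ : Measure (Fin d → ℝ)), IsProbabilityMeasure ρ → 0 < d →
          meanVec ρ = 0 →
          (covMatrix ρ).PosDef →
          HansonWright ρ (fun _ => 0) (covMatrix ρ) CHW →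
          c * (d : ℝ) ≤ erk (covMatrix ρ) →
          ∀ p : ℕ, Even p → 0 < p →
            (∫ x, |(∑ i, (x i) ^ 2) - (covMatrix ρ).trace| ^ p ∂ρ) ^ ((p : ℝ)⁻¹)
              ≤ C' * (covMatrix ρ).trace * (p : ℝ) / Real.sqrt d := by
  intro c CHW hc hCHW
  refine ⟨16*(2*CHW + Real.sqrt CHW)/c, by positivity, ?_⟩
  intro d ρ hprob hd hmean hpd hHW herk p hpe hpp
  classical
  set A := covMatrix ρ with hA
  set T := A.trace with hT
  set s := specNorm A with hs
  set F2 := ∑ i, ∑ j, (A i j)^2 with hF2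
  have hp1 : 1 ≤ p := hpp
  have hpR : (1:ℝ) ≤ (p:ℝ) := by exact_mod_cast hp1
  have hpRpos : (0:ℝ) < (p:ℝ) := by positivity
  have hd1 : (1:ℝ) ≤ (d:ℝ) := by exact_mod_cast hd
  have hdR : (0:ℝ) < (d:ℝ) := by positivity
  let i0 : Fin d := ⟨0, hd⟩
  have hdiag : 0 < A i0 i0 := by
    have hne : (Pi.single i0 1 : Fin d → ℝ) ≠ 0 := by
      intro h
      have := congrFun h i0
      simp at this
    have := hpd.dotProduct_mulVec_pos hne
    simpa [Matrix.mulVec_single, dotProduct, Pi.single_apply] using this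
  have hcol : ∀ i : Fin d, ∑ j, (A j i)^2 ≤ s^2 := by
    intro i
    have h := mulVec_sq_le' A (Pi.single i 1 : _)
    have h1 : ∑ j, ((Pi.single i 1 : Fin d → ℝ) j)^2 = 1 := by
      simp [Pi.single_apply]
    rw [h1, mul_one] at h
    simpa [Matrix.mulVec_single] using h
  have hs0 : 0 ≤ s := norm_nonneg _
  have hspos : 0 < s := by
    have h1 : (A i0 i0)^2 ≤ ∑ j, (A j i0)^2 :=
      Finset.single_le_sum (f := fun j => (A j i0)^2) (fun j _ => sq_nonneg _)
        (Finset.mem_univ i0)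
    nlinarith [hcol i0]
  have hF2pos : 0 < F2 := by
    have h1 : (A i0 i0)^2 ≤ ∑ j, (A i0 j)^2 :=
      Finset.single_le_sum (f := fun j => (A i0 j)^2) (fun j _ => sq_nonneg _)
        (Finset.mem_univ i0)
    have h2 : ∑ j, (A i0 j)^2 ≤ F2 :=
      Finset.single_le_sum (f := fun i => ∑ j, (A i j)^2) (fun i _ => by positivity)
        (Finset.mem_univ i0)
    nlinarith
  have hF2le : F2 ≤ (d:ℝ) * s^2 := by
    rw [hF2, Finset.sum_comm]
    calc ∑ j, ∑ i, (A i j)^2 ≤ ∑ _j : Fin d, s^2 :=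
          Finset.sum_le_sum (fun j _ => hcol j)
      _ = (d:ℝ) * s^2 := by
          rw [Finset.sum_const, Finset.card_univ, Fintype.card_fin, nsmul_eq_mul]
  have hTge : c * (d:ℝ) * s ≤ T := by
    have := (le_div_iff₀ hspos).mp herk
    exact this
  have hTpos : 0 < T := lt_of_lt_of_le (by positivity) hTge
  have hsleT : s ≤ T / (c * (d:ℝ)) := by
    rw [le_div_iff₀ (by positivity)]
    nlinarith
  have hfrob : (frobNorm A)^2 = F2 := Real.sq_sqrt (by positivity)
  -- tail bound
  have htail : ∀ t : ℝ, 0 < t →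
      ρ {x | t ≤ |(∑ i, (x i)^2) - T|}
        ≤ ENNReal.ofReal (2*Real.exp (-(t^2/(CHW*F2))) + 2*Real.exp (-(t/(CHW*s)))) := by
    intro t ht
    have h := hHW A t ht
    have hq : ∀ x : Fin d → ℝ,
        (∑ j, ∑ k, ((invSqrt A).mulVec (fun l => x l - (0:ℝ))) j * A j k *
          ((invSqrt A).mulVec (fun l => x l - (0:ℝ))) k) = ∑ i, (x i)^2 := by
      intro x
      have hx : (fun l => x l - (0:ℝ)) = x := by funext l; simp
      rw [hx]
      exact quadform_id' hpd x
    have hsetEq : {x : Fin d → ℝ | t ≤ |(∑ j, ∑ k,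
          ((invSqrt A).mulVec (fun l => x l - (0:ℝ))) j * A j k *
          ((invSqrt A).mulVec (fun l => x l - (0:ℝ))) k) - A.trace|}
        = {x : Fin d → ℝ | t ≤ |(∑ i, (x i)^2) - T|} := by
      ext x
      simp only [Set.mem_setOf_eq, hq x, hT]
    rw [hsetEq] at h
    refine le_trans h (ENNReal.ofReal_le_ofReal ?_)
    rw [hfrob]
    rcases le_total (t^2/F2) (t/s) with hmin | hmin
    · rw [min_eq_left hmin]
      have he : -(1/CHW) * (t^2/F2) = -(t^2/(CHW*F2)) := by
        field_simp
      rw [he]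
      have := Real.exp_pos (-(t/(CHW*s)))
      linarith
    · rw [min_eq_right hmin]
      have he : -(1/CHW) * (t/s) = -(t/(CHW*s)) := by
        field_simp
      rw [he]
      have := Real.exp_pos (-(t^2/(CHW*F2)))
      linarith
  -- measurability
  have hgm : Measurable (fun x : Fin d → ℝ => |(∑ i, (x i)^2) - T|) := by
    apply Measurable.abs
    apply Measurable.sub _ measurable_const
    exact Finset.measurable_sum Finset.univ (fun i _ => (measurable_pi_apply i).pow_const 2)
  have hg_nn : 0 ≤ᵐ[ρ] fun x : Fin d → ℝ => |(∑ i, (x i)^2) - T| :=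
    Filter.Eventually.of_forall fun x => abs_nonneg _
  -- layer cake
  have hlc := MeasureTheory.lintegral_rpow_eq_lintegral_meas_le_mul ρ hg_nn
    hgm.aemeasurable hpRpos
  -- the two dominating scales
  set M₁ := 2*(p:ℝ)*(CHW*s) with hM₁
  set M₂ := Real.sqrt ((p:ℝ)*(CHW*F2)) with hM₂
  have hM₁pos : 0 < M₁ := by positivity
  have hM₂pos : 0 < M₂ := Real.sqrt_pos.mpr (by positivity)
  have hbound₁ : ∀ t : ℝ, 0 < t → Real.exp (-(t^2/(CHW*F2))) ≤ (M₂/t)^(2*p) := by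
    intro t ht
    have hu : 0 < t^2/(CHW*F2) := by positivity
    calc Real.exp (-(t^2/(CHW*F2))) ≤ ((p:ℝ)/(t^2/(CHW*F2)))^p := exp_neg_le_pow' p hp1 _ hu
      _ = ((M₂/t)^2)^p := by
          congr 1
          rw [div_pow, hM₂, Real.sq_sqrt (by positivity)]
          field_simp
      _ = (M₂/t)^(2*p) := (pow_mul _ 2 p).symm
  have hbound₂ : ∀ t : ℝ, 0 < t → Real.exp (-(t/(CHW*s))) ≤ (M₁/t)^(2*p) := by
    intro t ht
    have hu : 0 < t/(CHW*s) := by positivity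
    calc Real.exp (-(t/(CHW*s))) ≤ (((2*p:ℕ):ℝ)/(t/(CHW*s)))^(2*p) :=
          exp_neg_le_pow' (2*p) (by omega) _ hu
      _ = (M₁/t)^(2*p) := by
          congr 1
          rw [hM₁]
          push_cast
          field_simp
  have key₁ := key_integral' M₂ hM₂pos p hp1 (fun t => Real.exp (-(t^2/(CHW*F2))))
    (fun t ht => Real.exp_le_one_iff.mpr (neg_nonpos.mpr (by positivity))) hbound₁
  have key₂ := key_integral' M₁ hM₁pos p hp1 (fun t => Real.exp (-(t/(CHW*s))))
    (fun t ht => Real.exp_le_one_iff.mpr (neg_nonpos.mpr (by positivity))) hbound₂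
  have hcont₁ : Measurable (fun t:ℝ =>
      ENNReal.ofReal (2*(Real.exp (-(t^2/(CHW*F2))) * t^((p:ℝ)-1)))) := by
    apply Measurable.ennreal_ofReal
    apply Measurable.const_mul
    apply Measurable.mul
    · exact (Real.continuous_exp.comp (((continuous_pow 2).div_const (CHW*F2)).neg)).measurable
    · exact (Real.continuous_rpow_const (by linarith)).measurable
  have main : ∫⁻ t in Set.Ioi (0:ℝ),
        ρ {x | t ≤ |(∑ i, (x i)^2) - T|} * ENNReal.ofReal (t^((p:ℝ)-1))
      ≤ ENNReal.ofReal (4*(M₂^((p:ℝ)) + M₁^((p:ℝ)))) := by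
    calc ∫⁻ t in Set.Ioi (0:ℝ),
          ρ {x | t ≤ |(∑ i, (x i)^2) - T|} * ENNReal.ofReal (t^((p:ℝ)-1))
        ≤ ∫⁻ t in Set.Ioi (0:ℝ),
            (ENNReal.ofReal (2*(Real.exp (-(t^2/(CHW*F2))) * t^((p:ℝ)-1)))
             + ENNReal.ofReal (2*(Real.exp (-(t/(CHW*s))) * t^((p:ℝ)-1)))) := by
          apply MeasureTheory.setLIntegral_mono' measurableSet_Ioi
          intro t ht
          rw [Set.mem_Ioi] at ht
          calc ρ {x | t ≤ |(∑ i, (x i)^2) - T|} * ENNReal.ofReal (t^((p:ℝ)-1))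
              ≤ ENNReal.ofReal (2*Real.exp (-(t^2/(CHW*F2))) + 2*Real.exp (-(t/(CHW*s))))
                  * ENNReal.ofReal (t^((p:ℝ)-1)) := mul_le_mul_left (htail t ht) _
            _ = ENNReal.ofReal ((2*Real.exp (-(t^2/(CHW*F2))) + 2*Real.exp (-(t/(CHW*s))))
                  * t^((p:ℝ)-1)) := (ENNReal.ofReal_mul (by positivity)).symm
            _ = ENNReal.ofReal (2*(Real.exp (-(t^2/(CHW*F2))) * t^((p:ℝ)-1))
                  + 2*(Real.exp (-(t/(CHW*s))) * t^((p:ℝ)-1))) := by congr 1; ring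
            _ ≤ _ := ENNReal.ofReal_add_le
      _ = (∫⁻ t in Set.Ioi (0:ℝ),
              ENNReal.ofReal (2*(Real.exp (-(t^2/(CHW*F2))) * t^((p:ℝ)-1))))
          + ∫⁻ t in Set.Ioi (0:ℝ),
              ENNReal.ofReal (2*(Real.exp (-(t/(CHW*s))) * t^((p:ℝ)-1))) :=
          MeasureTheory.lintegral_add_left hcont₁ _
      _ ≤ ENNReal.ofReal 2 * ENNReal.ofReal (2*M₂^((p:ℝ)))
          + ENNReal.ofReal 2 * ENNReal.ofReal (2*M₁^((p:ℝ))) := by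
          apply add_le_add
          · calc ∫⁻ t in Set.Ioi (0:ℝ),
                  ENNReal.ofReal (2*(Real.exp (-(t^2/(CHW*F2))) * t^((p:ℝ)-1)))
                = ENNReal.ofReal 2 * ∫⁻ t in Set.Ioi (0:ℝ),
                    ENNReal.ofReal (Real.exp (-(t^2/(CHW*F2))) * t^((p:ℝ)-1)) := by
                  simp_rw [ENNReal.ofReal_mul (by norm_num : (0:ℝ) ≤ 2)]
                  rw [MeasureTheory.lintegral_const_mul' _ _ ENNReal.ofReal_ne_top]
              _ ≤ _ := mul_le_mul_right key₁ _
          · calc ∫⁻ t in Set.Ioi (0:ℝ),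
                  ENNReal.ofReal (2*(Real.exp (-(t/(CHW*s))) * t^((p:ℝ)-1)))
                = ENNReal.ofReal 2 * ∫⁻ t in Set.Ioi (0:ℝ),
                    ENNReal.ofReal (Real.exp (-(t/(CHW*s))) * t^((p:ℝ)-1)) := by
                  simp_rw [ENNReal.ofReal_mul (by norm_num : (0:ℝ) ≤ 2)]
                  rw [MeasureTheory.lintegral_const_mul' _ _ ENNReal.ofReal_ne_top]
              _ ≤ _ := mul_le_mul_right key₂ _
      _ = ENNReal.ofReal (4*(M₂^((p:ℝ)) + M₁^((p:ℝ)))) := by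
          rw [← ENNReal.ofReal_mul (by norm_num), ← ENNReal.ofReal_mul (by norm_num),
            ← ENNReal.ofReal_add (by positivity) (by positivity)]
          congr 1; ring
  have hnum : (p:ℝ) * (4*(M₂^((p:ℝ)) + M₁^((p:ℝ)))) ≤ (16*(M₁+M₂))^p := by
    rw [Real.rpow_natCast, Real.rpow_natCast]
    have h8 : 8*(p:ℝ) ≤ 16^p := by exact_mod_cast eight_mul_le' p hp1
    have e1 : M₁^p ≤ (M₁+M₂)^p := pow_le_pow_left₀ hM₁pos.le (by linarith) p
    have e2 : M₂^p ≤ (M₁+M₂)^p := pow_le_pow_left₀ hM₂pos.le (by linarith) p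
    have hMM : (0:ℝ) ≤ (M₁+M₂)^p := by positivity
    calc (p:ℝ) * (4*(M₂^p + M₁^p)) ≤ (p:ℝ) * (4*((M₁+M₂)^p + (M₁+M₂)^p)) := by
          apply mul_le_mul_of_nonneg_left _ hpRpos.le
          apply mul_le_mul_of_nonneg_left _ (by norm_num)
          exact add_le_add e2 e1
      _ = (8*(p:ℝ)) * (M₁+M₂)^p := by ring
      _ ≤ 16^p * (M₁+M₂)^p := mul_le_mul_of_nonneg_right h8 hMM
      _ = (16*(M₁+M₂))^p := (mul_pow _ _ _).symm
  have hfin1 : ∫⁻ x, ENNReal.ofReal (|(∑ i, (x i)^2) - T| ^ p) ∂ρ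
      ≤ ENNReal.ofReal ((16*(M₁+M₂))^p) := by
    have hconv : ∫⁻ x, ENNReal.ofReal (|(∑ i, (x i)^2) - T| ^ p) ∂ρ
        = ∫⁻ x, ENNReal.ofReal (|(∑ i, (x i)^2) - T| ^ ((p:ℝ))) ∂ρ :=
      MeasureTheory.lintegral_congr fun x => by rw [Real.rpow_natCast]
    rw [hconv, hlc]
    calc ENNReal.ofReal (p:ℝ) * ∫⁻ t in Set.Ioi (0:ℝ),
          ρ {x | t ≤ |(∑ i, (x i)^2) - T|} * ENNReal.ofReal (t^((p:ℝ)-1))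
        ≤ ENNReal.ofReal (p:ℝ) * ENNReal.ofReal (4*(M₂^((p:ℝ)) + M₁^((p:ℝ)))) :=
          mul_le_mul_right main _
      _ = ENNReal.ofReal ((p:ℝ) * (4*(M₂^((p:ℝ)) + M₁^((p:ℝ))))) :=
          (ENNReal.ofReal_mul (by positivity)).symm
      _ ≤ ENNReal.ofReal ((16*(M₁+M₂))^p) := ENNReal.ofReal_le_ofReal hnum
  -- scalar comparison
  set D := Real.sqrt d with hD
  have hDpos : 0 < D := Real.sqrt_pos.mpr hdR
  have hD1 : (1:ℝ) ≤ D := by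
    rw [hD, show (1:ℝ) = Real.sqrt 1 from (Real.sqrt_one).symm]
    exact Real.sqrt_le_sqrt hd1
  have hDd : D ≤ (d:ℝ) := by
    rw [hD]
    calc Real.sqrt d ≤ Real.sqrt ((d:ℝ)^2) := Real.sqrt_le_sqrt (by nlinarith)
      _ = (d:ℝ) := Real.sqrt_sq hdR.le
  have hD2 : D^2 = (d:ℝ) := Real.sq_sqrt hdR.le
  have hsD : s ≤ T/(c*D) := by
    refine le_trans hsleT ?_
    apply div_le_div_of_nonneg_left hTpos.le (by positivity)
    exact mul_le_mul_of_nonneg_left hDd hc.le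
  have hM₁K : M₁ ≤ 2*CHW*(T*(p:ℝ)/(c*D)) := by
    calc M₁ = 2*(p:ℝ)*(CHW*s) := hM₁
      _ ≤ 2*(p:ℝ)*(CHW*(T/(c*D))) := by
          apply mul_le_mul_of_nonneg_left _ (by positivity)
          exact mul_le_mul_of_nonneg_left hsD hCHW.le
      _ = 2*CHW*(T*(p:ℝ)/(c*D)) := by ring
  have hM₂K : M₂ ≤ Real.sqrt CHW * (T*(p:ℝ)/(c*D)) := by
    have hRnn : 0 ≤ Real.sqrt CHW * (T*(p:ℝ)/(c*D)) := by positivity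
    have hXle : (p:ℝ)*(CHW*F2) ≤ (Real.sqrt CHW * (T*(p:ℝ)/(c*D)))^2 := by
      have hsqC : Real.sqrt CHW ^2 = CHW := Real.sq_sqrt hCHW.le
      have h1 : (c*(d:ℝ)*s)^2 ≤ T^2 := pow_le_pow_left₀ (by positivity) hTge 2
      have hpp2 : (p:ℝ) ≤ (p:ℝ)^2 := by nlinarith
      have hmain : (p:ℝ)*(CHW*F2) * (c^2*(d:ℝ)) ≤ CHW * (T^2*(p:ℝ)^2) := by
        have hstep4 : (p:ℝ)*CHW*T^2 ≤ CHW*(T^2*(p:ℝ)^2) := by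
          nlinarith [mul_nonneg (mul_nonneg (sub_nonneg.2 hpp2) hCHW.le) (sq_nonneg T)]
        have hstep3 : (p:ℝ)*CHW*(c*(d:ℝ)*s)^2 ≤ (p:ℝ)*CHW*T^2 := by
          apply mul_le_mul_of_nonneg_left h1 (by positivity)
        have hstep : (p:ℝ)*(CHW*F2) * (c^2*(d:ℝ)) ≤ (p:ℝ)*(CHW*((d:ℝ)*s^2)) * (c^2*(d:ℝ)) := by
          apply mul_le_mul_of_nonneg_right _ (by positivity)
          apply mul_le_mul_of_nonneg_left _ hpRpos.le
          exact mul_le_mul_of_nonneg_left hF2le hCHW.le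
        calc (p:ℝ)*(CHW*F2) * (c^2*(d:ℝ))
            ≤ (p:ℝ)*(CHW*((d:ℝ)*s^2)) * (c^2*(d:ℝ)) := hstep
          _ = (p:ℝ)*CHW*(c*(d:ℝ)*s)^2 := by ring
          _ ≤ (p:ℝ)*CHW*T^2 := hstep3
          _ ≤ CHW*(T^2*(p:ℝ)^2) := hstep4
      calc (p:ℝ)*(CHW*F2) ≤ CHW*(T^2*(p:ℝ)^2)/(c^2*(d:ℝ)) := by
            rw [le_div_iff₀ (by positivity)]
            exact hmain
        _ = (Real.sqrt CHW * (T*(p:ℝ)/(c*D)))^2 := by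
            rw [mul_pow, hsqC, div_pow, mul_pow, mul_pow, hD2]
            ring
    calc M₂ = Real.sqrt ((p:ℝ)*(CHW*F2)) := hM₂
      _ ≤ Real.sqrt ((Real.sqrt CHW * (T*(p:ℝ)/(c*D)))^2) := Real.sqrt_le_sqrt hXle
      _ = Real.sqrt CHW * (T*(p:ℝ)/(c*D)) := Real.sqrt_sq hRnn
  have hK : 16*(M₁+M₂) ≤ (16*(2*CHW + Real.sqrt CHW)/c) * T * (p:ℝ) / D := by
    have heq : (16*(2*CHW + Real.sqrt CHW)/c) * T * (p:ℝ) / D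
        = 16*(2*CHW*(T*(p:ℝ)/(c*D)) + Real.sqrt CHW*(T*(p:ℝ)/(c*D))) := by
      field_simp
    rw [heq]
    linarith [hM₁K, hM₂K]
  -- conclusion
  have hK'nn : 0 ≤ (16*(2*CHW + Real.sqrt CHW)/c) * T * (p:ℝ) / D := by positivity
  have hIntLe : ∫ x, |(∑ i, (x i)^2) - T| ^ p ∂ρ
      ≤ ((16*(2*CHW + Real.sqrt CHW)/c) * T * (p:ℝ) / D)^p := by
    rw [MeasureTheory.integral_eq_lintegral_of_nonneg_ae
      (Filter.Eventually.of_forall fun x => by positivity)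
      ((hgm.pow_const p).aestronglyMeasurable)]
    apply ENNReal.toReal_le_of_le_ofReal (by positivity)
    calc ∫⁻ x, ENNReal.ofReal (|(∑ i, (x i)^2) - T| ^ p) ∂ρ
        ≤ ENNReal.ofReal ((16*(M₁+M₂))^p) := hfin1
      _ ≤ ENNReal.ofReal (((16*(2*CHW + Real.sqrt CHW)/c) * T * (p:ℝ) / D)^p) :=
        ENNReal.ofReal_le_ofReal (pow_le_pow_left₀ (by positivity) hK p)
  have h0int : 0 ≤ ∫ x, |(∑ i, (x i)^2) - T| ^ p ∂ρ :=
    MeasureTheory.integral_nonneg fun x => by positivity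
  calc (∫ x, |(∑ i, (x i)^2) - T| ^ p ∂ρ) ^ ((p:ℝ)⁻¹)
      ≤ (((16*(2*CHW + Real.sqrt CHW)/c) * T * (p:ℝ) / D)^p) ^ ((p:ℝ)⁻¹) :=
        Real.rpow_le_rpow h0int hIntLe (by positivity)
    _ = (16*(2*CHW + Real.sqrt CHW)/c) * T * (p:ℝ) / D := by
        rw [← Real.rpow_natCast _ p, ← Real.rpow_mul hK'nn,
          mul_inv_cancel₀ (ne_of_gt hpRpos), Real.rpow_one]



end Paper
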